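/- Let L_{0-1}(f(x), y) = 1[argmax_{y'} f_{y'}(x) ≠ y] and let f*_{0-1} be the Bayes optimal classifier. For any classifier f, the excess 0-1 risk satisfies R_{0-1}(f) − R_{0-1}(f*_{0-1}) ≤ 1 − E_{p(x)} 1[(y* = ỹ*) ∧ (f_{ỹ*}(x) > 1/2)], where y* = argmax_y p(y|x) and ỹ* = argmax_ỹ p̃(ỹ|x) (assumed unique). -/

import Mathlib

open Finset MeasureTheory

/-- Theorem 3: the excess 0-1 risk of any classifier f is bounded by one minus
the probability of the event that the clean and noisy posteriors share the same
(unique) argmax and f assigns it probability greater than 1/2. -/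
theorem excess_01_risk_bound {X : Type*} [MeasurableSpace X]
    (μ : Measure X) [IsProbabilityMeasure μ] (k : ℕ)
    (p ptilde : X → Fin k → ℝ) (f : X → Fin k → ℝ)
    (hp : ∀ x i, 0 ≤ p x i) (hpsum : ∀ x, ∑ i, p x i = 1)
    (hpt : ∀ x i, 0 ≤ ptilde x i) (hptsum : ∀ x, ∑ i, ptilde x i = 1)
    (hf : ∀ x i, 0 ≤ f x i) (hfsum : ∀ x, ∑ i, f x i = 1)
    (ystar tystar : X → Fin k)
    (hystar : ∀ x y, y ≠ ystar x → p x y < p x (ystar x))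
    (htystar : ∀ x y, y ≠ tystar x → ptilde x y < ptilde x (tystar x))
    (predf : X → Fin k)
    (hpred : ∀ x y, f x y ≤ f x (predf x))
    (hInt₁ : Integrable (fun x => 1 - p x (predf x)) μ)
    (hInt₂ : Integrable (fun x => 1 - p x (ystar x)) μ)
    (hInt₃ : Integrable (fun x =>
      if ystar x = tystar x ∧ 1 / 2 < f x (tystar x) then (1 : ℝ) else 0) μ) :
    (∫ x, (1 - p x (predf x)) ∂μ) - (∫ x, (1 - p x (ystar x)) ∂μ) ≤
      1 - ∫ x,
        (if ystar x = tystar x ∧ 1 / 2 < f x (tystar x) then (1 : ℝ) else 0) ∂μ := by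
  have hIntc : Integrable (fun x =>
      (1 : ℝ) - (if ystar x = tystar x ∧ 1 / 2 < f x (tystar x) then (1 : ℝ) else 0)) μ :=
    (integrable_const 1).sub hInt₃
  have key : ∫ x, ((1 - p x (predf x)) - (1 - p x (ystar x))) ∂μ ≤
      ∫ x, ((1 : ℝ) - (if ystar x = tystar x ∧ 1 / 2 < f x (tystar x) then (1 : ℝ) else 0)) ∂μ := by
    apply integral_mono (hInt₁.sub hInt₂) hIntc
    intro x
    by_cases h : ystar x = tystar x ∧ 1 / 2 < f x (tystar x)
    · have hpf : predf x = tystar x := by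
        by_contra hne
        have h1 : 1 / 2 < f x (predf x) := lt_of_lt_of_le h.2 (hpred x (tystar x))
        have hsum : f x (predf x) + f x (tystar x) ≤ ∑ i, f x i := by
          have := Finset.add_sum_erase Finset.univ (f x) (Finset.mem_univ (predf x))
          rw [← this]
          have hmem : tystar x ∈ Finset.univ.erase (predf x) :=
            Finset.mem_erase.2 ⟨Ne.symm hne, Finset.mem_univ _⟩
          have := Finset.single_le_sum (f := f x) (fun i _ => hf x i) hmem
          linarith
        rw [hfsum x] at hsum
        linarith
      simp only [Pi.sub_apply, if_pos h, hpf, h.1]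
      split <;> linarith
    · have h1 : p x (ystar x) ≤ 1 := by
        have := Finset.single_le_sum (f := p x) (fun i _ => hp x i) (Finset.mem_univ (ystar x))
        rw [hpsum x] at this; exact this
      have h2 := hp x (predf x)
      simp only [if_neg h, Pi.sub_apply]
      linarith
  rw [integral_sub hInt₁ hInt₂] at key
  rw [integral_sub (integrable_const 1) hInt₃, integral_const, probReal_univ] at key
  simpa using key
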